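/- Let A be a finite-dimensional hereditary algebra over a field k (every left ideal of A is projective as a left A-module; equivalently, every right ideal is projective as a right A-module). For any two two-sided ideals I and J of A, the A-A-bimodule map I ⊗_A J → A induced by multiplication is injective, and its image is the product ideal IJ; in particular I ⊗_A J ≅ IJ as A-A-bimodules, so that the dual projection functors satisfy Dp_I ∘ Dp_J ≅ Dp_{IJ}, where Dp_I denotes the right exact endofunctor I ⊗_A − of the category of finite-dimensional left A-modules. -/

import Mathlib

set_option maxHeartbeats 1000000
set_option synthInstance.maxHeartbeats 400000

open TensorProduct

/-- The multiplication map `I ⊗_k J → A` for two `k`-subspaces `I`, `J` of a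
`k`-algebra `A`. -/
noncomputable def mulMap (k A : Type) [CommRing k] [Ring A] [Algebra k A]
    (I J : Submodule k A) : (↥I ⊗[k] ↥J) →ₗ[k] A :=
  TensorProduct.lift (LinearMap.compl₁₂ (LinearMap.mul k A) I.subtype J.subtype)

/-- The submodule of `I ⊗_k J` spanned by the "balancing" relators `xa ⊗ y - x ⊗ ay`;
the quotient of `I ⊗_k J` by it is the tensor product `I ⊗_A J` of the right `A`-module
`I` with the left `A`-module `J`.  Hence the `A`-`A`-bimodule map `I ⊗_A J → A` induced
by multiplication is injective if and only if the kernel of `mulMap` equals `balRel`. -/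
noncomputable def balRel (k A : Type) [CommRing k] [Ring A] [Algebra k A]
    (I J : Submodule k A) : Submodule k (↥I ⊗[k] ↥J) :=
  Submodule.span k {z | ∃ (b : I) (d : J) (a : A) (h1 : (b : A) * a ∈ I) (h2 : a * (d : A) ∈ J),
    z = (⟨(b : A) * a, h1⟩ : I) ⊗ₜ[k] d - (b ⊗ₜ[k] (⟨a * (d : A), h2⟩ : J))}

/-- STATEMENT 19: let `A` be a finite-dimensional hereditary algebra over a field `k`
(every left ideal of `A` is projective as a left `A`-module).  For any two two-sided
ideals `I`, `J` of `A`, the `A`-`A`-bimodule map `I ⊗_A J → A` induced by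
multiplication is injective (the kernel of the multiplication map `I ⊗_k J → A` is
exactly the submodule of balancing relators defining `I ⊗_A J`), and its image is the
product ideal `IJ`.  In particular `I ⊗_A J ≅ IJ` as `A`-`A`-bimodules, so the dual
projection functors `Dp_I = I ⊗_A -` satisfy `Dp_I ∘ Dp_J ≅ Dp_{IJ}`. -/
theorem statement19 (k A : Type) [Field k] [Ring A] [Algebra k A] [FiniteDimensional k A]
    (hhered : ∀ I : Ideal A, Module.Projective A ↥I)
    (I J : Submodule k A)
    (hI : (∀ a : A, ∀ x ∈ I, a * x ∈ I) ∧ (∀ a : A, ∀ x ∈ I, x * a ∈ I))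
    (hJ : (∀ a : A, ∀ x ∈ J, a * x ∈ J) ∧ (∀ a : A, ∀ x ∈ J, x * a ∈ J)) :
    LinearMap.ker (mulMap k A I J) = balRel k A I J ∧
    LinearMap.range (mulMap k A I J) = I * J := by
  constructor
  ·
    classical
    have hmul : ∀ (x : ↥I) (y : ↥J), mulMap k A I J (x ⊗ₜ[k] y) = (x : A) * (y : A) := by
      intro x y; simp [mulMap]
    -- J as an ideal of A
    let J' : Ideal A :=
      { carrier := J
        add_mem' := fun ha hb => J.add_mem ha hb
        zero_mem' := J.zero_mem
        smul_mem' := fun a {x} hx => hJ.1 a x hx }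
    haveI := hhered J'
    obtain ⟨s, hs⟩ := Module.Projective.out (R := A) (P := ↥J')
    -- conversion ↥J →ₗ[k] ↥J'
    let e : ↥J →ₗ[k] ↥J' :=
      { toFun := fun y => ⟨y.1, y.2⟩
        map_add' := fun a b => rfl
        map_smul' := fun c a => rfl }
    -- left multiplication by x ∈ I, landing in I
    let lmul : ↥I → A →ₗ[k] ↥I := fun x =>
      { toFun := fun a => ⟨x.1 * a, hI.2 a x.1 x.2⟩
        map_add' := fun a b => Subtype.ext (mul_add _ _ _)
        map_smul' := fun c a => Subtype.ext (by simp [mul_smul_comm]) }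
    -- bilinear map (x, y) ↦ coordinatewise x * (s y)
    let B : ↥I →ₗ[k] ↥J →ₗ[k] (↥J' →₀ ↥I) := LinearMap.mk₂ k
      (fun x y => Finsupp.mapRange.linearMap (lmul x) (s (e y)))
      (fun x₁ x₂ y => by ext y0; simp [lmul, add_mul])
      (fun c x y => by ext y0; simp [lmul, smul_mul_assoc])
      (fun x y₁ y₂ => by simp only [map_add])
      (fun c x y => by simp only [map_smul, LinearMap.map_smul_of_tower])
    let Ψ : (↥I ⊗[k] ↥J) →ₗ[k] (↥J' →₀ ↥I) := TensorProduct.lift B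
    -- multiplication landing in J'
    let mul' : ↥I →ₗ[k] ↥J →ₗ[k] ↥J' := LinearMap.mk₂ k
      (fun x y => ⟨x.1 * y.1, hJ.1 x.1 y.1 y.2⟩)
      (fun x₁ x₂ y => Subtype.ext (add_mul _ _ _))
      (fun c x y => Subtype.ext (by simp [smul_mul_assoc]))
      (fun x y₁ y₂ => Subtype.ext (mul_add _ _ _))
      (fun c x y => Subtype.ext (by simp [mul_smul_comm]))
    let μ' : (↥I ⊗[k] ↥J) →ₗ[k] ↥J' := TensorProduct.lift mul'
    have hμ' : ∀ z, ((μ' z : ↥J') : A) = mulMap k A I J z := by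
      intro z
      induction z using TensorProduct.induction_on with
      | zero => simp
      | tmul x y => rw [hmul]; rfl
      | add a b ha hb => rw [map_add, map_add, Submodule.coe_add, ha, hb]
    -- key: Ψ = s ∘ μ'
    have hkey : ∀ z, Finsupp.mapRange.linearMap I.subtype (Ψ z)
        = s (μ' z) := by
      intro z
      induction z using TensorProduct.induction_on with
      | zero => simp
      | tmul x y =>
        have h1 : μ' (x ⊗ₜ y) = x.1 • (e y) := Subtype.ext rfl
        have h2 : Ψ (x ⊗ₜ y) = Finsupp.mapRange.linearMap (lmul x) (s (e y)) := rfl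
        rw [h1, map_smul, h2]
        ext y0
        simp [lmul, smul_eq_mul]
      | add a b ha hb => simp only [map_add, ha, hb]
    have hΨ0 : ∀ z ∈ LinearMap.ker (mulMap k A I J), Ψ z = 0 := by
      intro z hz
      have hz' : μ' z = 0 := Subtype.ext (by rw [hμ' z]; exact hz)
      have := hkey z
      rw [hz', map_zero] at this
      ext y0
      have h3 : ((Finsupp.mapRange.linearMap I.subtype) (Ψ z)) y0 = 0 := by
        rw [this]; rfl
      rw [Finsupp.mapRange.linearMap_apply, Finsupp.mapRange_apply] at h3
      simp only [Submodule.coe_subtype] at h3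
      simpa using Subtype.ext h3
    -- the quotient map
    set π := Submodule.mkQ (R := k) (M := ↥I ⊗[k] ↥J) (balRel k A I J) with hπdef
    have hgen : ∀ (x : ↥I) (a : A) (y0 : ↥J),
        π ((⟨x.1 * a, hI.2 a x.1 x.2⟩ : ↥I) ⊗ₜ[k] y0)
          = π (x ⊗ₜ (⟨a * y0.1, hJ.1 a y0.1 y0.2⟩ : ↥J)) := by
      intro x a y0
      rw [← sub_eq_zero, ← map_sub, Submodule.mkQ_apply, Submodule.Quotient.mk_eq_zero]
      exact Submodule.subset_span ⟨x, y0, a, hI.2 a x.1 x.2, hJ.1 a y0.1 y0.2, rfl⟩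
    -- reconstruction of y from s
    have hy : ∀ y : ↥J,
        (∑ y0 ∈ (s (e y)).support, (⟨(s (e y)) y0 * y0.1, hJ.1 _ y0.1 y0.2⟩ : ↥J)) = y := by
      intro y
      apply Subtype.ext
      have h := congrArg Subtype.val (hs (e y))
      rw [Finsupp.linearCombination_apply, Finsupp.sum] at h
      rw [AddSubmonoidClass.coe_finset_sum] at h
      simp only [id_eq, SetLike.val_smul, smul_eq_mul] at h
      have he : ((e y : ↥J') : A) = (y : A) := rfl
      rw [he] at h
      rw [AddSubmonoidClass.coe_finset_sum]
      simpa using h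
    have hmain : ∀ z, π z =
        (Finsupp.lsum k fun y0 : ↥J' =>
          π.comp ((TensorProduct.mk k ↥I ↥J).flip ⟨y0.1, y0.2⟩)) (Ψ z) := by
      intro z
      induction z using TensorProduct.induction_on with
      | zero => simp
      | tmul x y =>
        have h2 : Ψ (x ⊗ₜ y) = Finsupp.mapRange (lmul x) (map_zero _) (s (e y)) := rfl
        rw [h2, Finsupp.lsum_apply, Finsupp.sum_mapRange_index (by simp)]
        rw [Finsupp.sum]
        calc π (x ⊗ₜ[k] y)
            = π (x ⊗ₜ[k] (∑ y0 ∈ (s (e y)).support,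
                (⟨(s (e y)) y0 * y0.1, hJ.1 _ y0.1 y0.2⟩ : ↥J))) := by rw [hy y]
          _ = ∑ y0 ∈ (s (e y)).support,
                π (x ⊗ₜ[k] (⟨(s (e y)) y0 * y0.1, hJ.1 _ y0.1 y0.2⟩ : ↥J)) := by
              rw [TensorProduct.tmul_sum, map_sum]
          _ = ∑ y0 ∈ (s (e y)).support,
                π ((lmul x ((s (e y)) y0)) ⊗ₜ[k] (⟨y0.1, y0.2⟩ : ↥J)) := by
              refine Finset.sum_congr rfl fun y0 _ => ?_
              exact (hgen x ((s (e y)) y0) ⟨y0.1, y0.2⟩).symm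
          _ = _ := rfl
      | add a b ha hb => rw [map_add, map_add, map_add, ha, hb]
    apply le_antisymm
    · intro z hz
      have h0 : π z = 0 := by rw [hmain z, hΨ0 z hz, map_zero]
      rwa [Submodule.mkQ_apply, Submodule.Quotient.mk_eq_zero] at h0
    · rw [balRel, Submodule.span_le]
      rintro z ⟨b, d, a, h1, h2, rfl⟩
      simp only [SetLike.mem_coe, LinearMap.mem_ker, map_sub, hmul]
      simp [mul_assoc]
  · have hmul : ∀ (x : ↥I) (y : ↥J), mulMap k A I J (x ⊗ₜ[k] y) = (x : A) * (y : A) := by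
      intro x y; simp [mulMap]
    apply le_antisymm
    · rintro _ ⟨z, rfl⟩
      induction z using TensorProduct.induction_on with
      | zero => simpa using Submodule.zero_mem (I * J)
      | tmul x y => rw [hmul]; exact Submodule.mul_mem_mul x.2 y.2
      | add a b ha hb => rw [map_add]; exact Submodule.add_mem _ ha hb
    · refine Submodule.mul_le.2 fun x hx y hy => ?_
      exact ⟨⟨x, hx⟩ ⊗ₜ ⟨y, hy⟩, hmul _ _⟩
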